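/- Recursion (L3): for every σ ∈ {0,1,…,r}^N, 𝐟(σ·r) = t^{-l}·𝐟((r-1)·σ) + q·t^{-l}·𝐟(r·σ), where l = #{i : σ_i < r}, σ·r denotes σ with the entry r appended, and (r-1)·σ and r·σ denote σ with the entry r-1 (respectively r) prepended. -/
import Mathlib


open MvPolynomial

noncomputable section

/-- The field `F = ℚ(q,a,t)` of rational functions in three variables over `ℚ`. -/
abbrev KRF : Type := FractionRing (MvPolynomial (Fin 3) ℚ)

/-- The variable `q` in `F`. -/
def fq : KRF := algebraMap (MvPolynomial (Fin 3) ℚ) KRF (X 0)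
/-- The variable `a` in `F`. -/
def fa : KRF := algebraMap (MvPolynomial (Fin 3) ℚ) KRF (X 1)
/-- The variable `t` in `F`. -/
def ft : KRF := algebraMap (MvPolynomial (Fin 3) ℚ) KRF (X 2)

/-- The number `|v|` of ones in a binary sequence. -/
def onesCt (v : List Bool) : ℕ := v.count true

/-- A p-family: a function on (balanced) pairs of binary sequences with values in
`F = ℚ(q,a,t)` satisfying the five recursion rules (1)-(5). -/
def IsPFamily (p : List Bool → List Bool → KRF) : Prop :=
  (∀ n : ℕ, p [] (List.replicate n false) = ((1 + fa) / (1 - fq)) ^ n) ∧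
  (∀ m : ℕ, p (List.replicate m false) [] = ((1 + fa) / (1 - fq)) ^ m) ∧
  (∀ v w : List Bool, onesCt v = onesCt w →
      p (v ++ [true]) (w ++ [true]) = (ft ^ onesCt v + fa) * p v w) ∧
  (∀ v w : List Bool, onesCt v = onesCt w + 1 →
      p (v ++ [false]) (w ++ [true]) = p v (true :: w)) ∧
  (∀ v w : List Bool, onesCt v + 1 = onesCt w →
      p (v ++ [true]) (w ++ [false]) = p (true :: v) w) ∧
  (∀ v w : List Bool, onesCt v = onesCt w →
      p (v ++ [false]) (w ++ [false]) =
        ft ^ (-(onesCt v : ℤ)) * p (true :: v) (true :: w) +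
          fq * ft ^ (-(onesCt v : ℤ)) * p (false :: v) (false :: w))

/-- The symbols `1`, `0`, `∗` used in fillings. -/
inductive Symb : Type
  | one : Symb
  | zero : Symb
  | star : Symb
deriving DecidableEq

/-- An admissible filling of the `r × N` grid (rows indexed top-to-bottom by `Fin r`,
columns left-to-right by `Fin N`): every row and every column contains at most one `1`,
every cell strictly below a `1` in the same column is `∗`, and every other cell is `0`
(i.e. every `∗` lies strictly below a `1` in its column). -/
def IsAdmissible {r N : ℕ} (T : Fin r → Fin N → Symb) : Prop :=
  (∀ (i : Fin r) (j j' : Fin N), T i j = Symb.one → T i j' = Symb.one → j = j') ∧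
  (∀ (j : Fin N) (i i' : Fin r), T i j = Symb.one → T i' j = Symb.one → i = i') ∧
  (∀ (i i' : Fin r) (j : Fin N), T i j = Symb.one → i < i' → T i' j = Symb.star) ∧
  (∀ (i : Fin r) (j : Fin N), T i j = Symb.star → ∃ i' : Fin r, i' < i ∧ T i' j = Symb.one)

/-- `σ(T)_j`: the number of cells labeled `0` in the `j`-th column of `T`. -/
def colZeros {r N : ℕ} (T : Fin r → Fin N → Symb) (j : Fin N) : ℕ :=
  (Finset.univ.filter (fun i => T i j = Symb.zero)).card

/-- `v(T)_j = 1` iff the `j`-th column of `T` is occupied (contains a `1`). -/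
def vFun {r N : ℕ} (T : Fin r → Fin N → Symb) (j : Fin N) : Bool :=
  decide (∃ i : Fin r, T i j = Symb.one)

/-- The binary sequence `v(T)` as a list. -/
def vList {r N : ℕ} (T : Fin r → Fin N → Symb) : List Bool :=
  (List.finRange N).map (vFun T)

/-- The binary sequence `w(T)`: read the entries of `T` from left to right along each row,
taking the rows from bottom to top, skipping all cells labeled `∗` (with `1 ↦ true`,
`0 ↦ false`). -/
def wList {r N : ℕ} (T : Fin r → Fin N → Symb) : List Bool :=
  ((List.finRange r).reverse.map (fun i =>
    (List.finRange N).filterMap (fun j =>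
      match T i j with
      | Symb.one => some true
      | Symb.zero => some false
      | Symb.star => none))).flatten

/-! ### Auxiliary machinery -/

/-- The canonical admissible filling with column-zero-counts `σ`. -/
def canonT (r : ℕ) {N : ℕ} (σ : Fin N → ℕ) : Fin r → Fin N → Symb :=
  fun i j =>
    if (i : ℕ) < σ j then Symb.zero else if (i : ℕ) = σ j then Symb.one else Symb.star

/-- Any admissible filling is determined by its column-zero-counts. -/
theorem eq_canonT {r N : ℕ} (T : Fin r → Fin N → Symb) (hT : IsAdmissible T)
    (σ : Fin N → ℕ) (hσ : ∀ j, colZeros T j = σ j) : T = canonT r σ := by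
  obtain ⟨-, hcol, hbelow, hstar⟩ := hT
  funext i j
  by_cases hone : ∃ i0, T i0 j = Symb.one
  · obtain ⟨i0, h0⟩ := hone
    have key : ∀ i : Fin r, T i j =
        if (i : ℕ) < (i0 : ℕ) then Symb.zero
        else if (i : ℕ) = (i0 : ℕ) then Symb.one else Symb.star := by
      intro i
      rcases lt_trichotomy i i0 with h | h | h
      · rw [if_pos (by exact h)]
        cases hTij : T i j with
        | one => exact absurd (hcol j i i0 hTij h0) (ne_of_lt h)
        | zero => rfl
        | star =>
          obtain ⟨i', hi', h1⟩ := hstar i j hTij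
          have : i' = i0 := hcol j i' i0 h1 h0
          subst this
          exact absurd (hi'.trans h) (lt_irrefl _)
      · subst h
        simpa using h0
      · rw [if_neg (by exact not_lt_of_gt h), if_neg (by exact (Fin.val_ne_of_ne (ne_of_gt h)))]
        exact hbelow i0 i j h0 h
    have hfilter : (Finset.univ.filter fun i : Fin r => T i j = Symb.zero) = Finset.Iio i0 := by
      ext x
      simp only [Finset.mem_filter, Finset.mem_univ, true_and, Finset.mem_Iio, key x, Fin.lt_def]
      split_ifs with h1 h2 <;> simp_all
    have hs : σ j = (i0 : ℕ) := by
      rw [← hσ j, colZeros, hfilter, Fin.card_Iio]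
    rw [key i]
    simp only [canonT, hs]
  · push_neg at hone
    have hz : ∀ i : Fin r, T i j = Symb.zero := by
      intro i
      cases hTij : T i j with
      | one => exact absurd hTij (hone i)
      | zero => rfl
      | star =>
        obtain ⟨i', _, h1⟩ := hstar i j hTij
        exact absurd h1 (hone i')
    have hs : σ j = r := by
      rw [← hσ j, colZeros]
      rw [Finset.filter_true_of_mem (fun i _ => hz i)]
      simp
    have : (i : ℕ) < σ j := hs ▸ i.isLt
    rw [hz i, canonT, if_pos this]

/-- The optional symbol contributed to `w` by a cell of the canonical filling. -/
def ent (i c : ℕ) : Option Bool :=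
  if i < c then some false else if i = c then some true else none

/-- The row contribution of row `i` in the canonical filling of `σ`. -/
def rowOf {N : ℕ} (σ : Fin N → ℕ) (i : ℕ) : List Bool :=
  (List.finRange N).filterMap (fun j => ent i (σ j))

theorem ent_of_lt {i c : ℕ} (h : i < c) : ent i c = some false := if_pos h

theorem ent_self (i : ℕ) : ent i i = some true := by simp [ent]

theorem vList_canonT (r : ℕ) {N : ℕ} (σ : Fin N → ℕ) :
    vList (canonT r σ) = (List.finRange N).map (fun j => decide (σ j < r)) := by
  unfold vList
  refine List.map_congr_left fun j _ => ?_
  unfold vFun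
  simp only [decide_eq_decide]
  constructor
  · rintro ⟨i, hi⟩
    unfold canonT at hi
    split_ifs at hi with h1 h2
    exact h2 ▸ i.isLt
  · intro h
    refine ⟨⟨σ j, h⟩, ?_⟩
    simp [canonT]

theorem wList_canonT (r : ℕ) {N : ℕ} (σ : Fin N → ℕ) :
    wList (canonT r σ) =
      ((List.finRange r).reverse.map (fun i : Fin r => rowOf σ (i : ℕ))).flatten := by
  have h : ∀ (i : Fin r) (j : Fin N),
      (match canonT r σ i j with
        | Symb.one => some true
        | Symb.zero => some false
        | Symb.star => none) = ent (i : ℕ) (σ j) := by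
    intro i j
    unfold canonT ent
    split_ifs <;> rfl
  unfold wList rowOf
  simp only [h]

theorem rowOf_snoc {N : ℕ} (σ : Fin N → ℕ) (r i : ℕ) (hi : i < r) :
    rowOf (Fin.snoc σ r : Fin (N + 1) → ℕ) i = rowOf σ i ++ [false] := by
  unfold rowOf
  rw [List.finRange_succ_last, List.filterMap_append, List.filterMap_map]
  simp [Function.comp_def, Fin.snoc_castSucc, Fin.snoc_last, ent_of_lt hi]

theorem rowOf_cons {N : ℕ} (σ : Fin N → ℕ) (c i : ℕ) :
    rowOf (Fin.cons c σ : Fin (N + 1) → ℕ) i = (ent i c).toList ++ rowOf σ i := by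
  unfold rowOf
  rw [List.finRange_succ, List.filterMap_cons, List.filterMap_map]
  simp only [Fin.cons_zero, Fin.cons_succ, Function.comp_def]
  cases ent i c <;> simp

theorem sum_map_reverse {α : Type*} (f : α → ℕ) (l : List α) :
    (l.reverse.map f).sum = (l.map f).sum := by
  induction l with
  | nil => rfl
  | cons a l ih =>
    simp only [List.reverse_cons, List.map_append, List.map_cons, List.sum_append,
      List.sum_cons, List.map_nil, List.sum_nil, ih]
    omega

theorem flat_append (a : List Bool) (l : List (List Bool)) :
    ((a :: l).map (· ++ [false])).flatten =
      (a ++ (l.map (false :: ·)).flatten) ++ [false] := by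
  induction l generalizing a with
  | nil => simp
  | cons b l ih =>
    simp only [List.map_cons, List.flatten_cons] at ih ⊢
    rw [ih b]
    simp

theorem count_true_map {α : Type*} (f : α → Bool) (l : List α) :
    (l.map f).count true = l.countP f := by
  induction l with
  | nil => rfl
  | cons a l ih => simp [List.count_cons, List.countP_cons, ih]

theorem count_true_filterMap {α : Type*} (f : α → Option Bool) (l : List α) :
    (l.filterMap f).count true = l.countP (fun x => decide (f x = some true)) := by
  induction l with
  | nil => rfl
  | cons a l ih =>
    rw [List.filterMap_cons, List.countP_cons]
    cases h : f a with
    | none => simp [h, ih]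
    | some b => cases b <;> simp [h, ih, List.count_cons]

theorem count_true_rowOf {N : ℕ} (σ : Fin N → ℕ) (i : ℕ) :
    (rowOf σ i).count true = (List.finRange N).countP (fun j => decide (σ j = i)) := by
  unfold rowOf
  rw [count_true_filterMap]
  refine List.countP_congr fun j _ => ?_
  unfold ent
  split_ifs with h1 h2 <;> simp <;> omega

theorem countP_lt_eq_sum (r : ℕ) (l : List ℕ) :
    l.countP (fun c => decide (c < r)) =
      ∑ i ∈ Finset.range r, l.countP (fun c => decide (c = i)) := by
  induction l with
  | nil => simp
  | cons a l ih =>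
    simp only [List.countP_cons, ih, Finset.sum_add_distrib, decide_eq_true_eq]
    congr 1
    rw [Finset.sum_ite_eq (Finset.range r) a (fun _ => 1)]
    simp [Finset.mem_range]

theorem sum_ite_eq_countP {α : Type*} (p : α → Prop) [DecidablePred p] (l : List α) :
    (l.map fun x => if p x then 1 else 0).sum = l.countP (fun x => decide (p x)) := by
  induction l with
  | nil => rfl
  | cons a l ih =>
    simp only [List.map_cons, List.sum_cons, List.countP_cons, ih, decide_eq_true_eq]
    omega

theorem card_univ_filter {N : ℕ} (p : Fin N → Prop) [DecidablePred p] :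
    (Finset.univ.filter p).card = (List.finRange N).countP (fun j => decide (p j)) := by
  rw [Finset.card_filter, Fin.sum_univ_def, sum_ite_eq_countP]

/-- Recursion (L3): `𝐟(σ·r) = t^{-l}·𝐟((r-1)·σ) + q·t^{-l}·𝐟(r·σ)` where
`l = #{i : σ_i < r}`.  Here `𝐟(σ) = p(v(σ), w(σ))`, with `T1`, `T2`, `T3` the unique
admissible fillings whose column-zero-counts are `σ·r`, `(r-1)·σ`, `r·σ` respectively. -/
theorem f_recursion_L3 (p : List Bool → List Bool → KRF) (hp : IsPFamily p)
    (r : ℕ) (hr : 1 ≤ r) (N : ℕ) (σ : Fin N → ℕ) (hσ : ∀ i, σ i ≤ r)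
    (T1 : Fin r → Fin (N + 1) → Symb) (hT1 : IsAdmissible T1)
    (hT1σ : ∀ j, colZeros T1 j = (Fin.snoc σ r : Fin (N + 1) → ℕ) j)
    (T2 : Fin r → Fin (N + 1) → Symb) (hT2 : IsAdmissible T2)
    (hT2σ : ∀ j, colZeros T2 j = (Fin.cons (r - 1) σ : Fin (N + 1) → ℕ) j)
    (T3 : Fin r → Fin (N + 1) → Symb) (hT3 : IsAdmissible T3)
    (hT3σ : ∀ j, colZeros T3 j = (Fin.cons r σ : Fin (N + 1) → ℕ) j) :
    p (vList T1) (wList T1) =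
      ft ^ (-(((Finset.univ.filter (fun i => σ i < r)).card : ℤ))) *
          p (vList T2) (wList T2) +
        fq * ft ^ (-(((Finset.univ.filter (fun i => σ i < r)).card : ℤ))) *
          p (vList T3) (wList T3) := by
  obtain ⟨r', rfl⟩ : ∃ r', r = r' + 1 := ⟨r - 1, (Nat.succ_pred_eq_of_pos hr).symm⟩
  clear hr
  simp only [Nat.add_sub_cancel] at hT2σ
  have e1 := eq_canonT T1 hT1 _ hT1σ
  have e2 := eq_canonT T2 hT2 _ hT2σ
  have e3 := eq_canonT T3 hT3 _ hT3σ
  subst e1 e2 e3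
  set v : List Bool := (List.finRange N).map (fun j => decide (σ j < r' + 1)) with hv
  set A : List Bool := rowOf σ r' with hA
  set L : List (List Bool) :=
      (((List.finRange r').map Fin.castSucc).reverse).map
        (fun i : Fin (r' + 1) => rowOf σ (i : ℕ)) with hL
  set w : List Bool := A ++ (L.map (false :: ·)).flatten with hw
  have hrev : (List.finRange (r' + 1)).reverse
      = Fin.last r' :: ((List.finRange r').map Fin.castSucc).reverse := by
    rw [List.finRange_succ_last, List.reverse_append]
    simp
  have hmem_lt : ∀ i ∈ ((List.finRange r').map Fin.castSucc).reverse, ((i : Fin (r'+1)) : ℕ) < r' := by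
    intro i hi
    rw [List.mem_reverse, List.mem_map] at hi
    obtain ⟨i', -, rfl⟩ := hi
    simpa using i'.isLt
  -- vList computations
  have hv1 : vList (canonT (r' + 1) (Fin.snoc σ (r' + 1) : Fin (N + 1) → ℕ)) = v ++ [false] := by
    rw [vList_canonT, List.finRange_succ_last, List.map_append, List.map_map]
    simp [hv, Function.comp_def, Fin.snoc_castSucc, Fin.snoc_last]
  have hv2 : vList (canonT (r' + 1) (Fin.cons r' σ : Fin (N + 1) → ℕ)) = true :: v := by
    rw [vList_canonT, List.finRange_succ, List.map_cons, List.map_map]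
    simp [hv, Function.comp_def, Fin.cons_zero, Fin.cons_succ, Nat.lt_succ_self]
  have hv3 : vList (canonT (r' + 1) (Fin.cons (r' + 1) σ : Fin (N + 1) → ℕ)) = false :: v := by
    rw [vList_canonT, List.finRange_succ, List.map_cons, List.map_map]
    simp [hv, Function.comp_def, Fin.cons_zero, Fin.cons_succ]
  -- wList computations
  have hcomp : (fun i : Fin (r' + 1) => rowOf σ (i : ℕ) ++ [false])
      = ((· ++ [false]) ∘ fun i : Fin (r' + 1) => rowOf σ (i : ℕ)) := rfl
  have hw1 : wList (canonT (r' + 1) (Fin.snoc σ (r' + 1) : Fin (N + 1) → ℕ)) = w ++ [false] := by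
    rw [wList_canonT,
      List.map_congr_left
        (fun i (_ : i ∈ (List.finRange (r'+1)).reverse) => rowOf_snoc σ (r' + 1) (i : ℕ) i.isLt),
      hrev, hcomp, ← List.map_map, List.map_cons, flat_append]
    rfl
  have hw2 : wList (canonT (r' + 1) (Fin.cons r' σ : Fin (N + 1) → ℕ)) = true :: w := by
    rw [wList_canonT, hrev, List.map_cons]
    have h1 : rowOf (Fin.cons (r' : ℕ) σ : Fin (N + 1) → ℕ) ((Fin.last r' : Fin (r'+1)) : ℕ)
        = true :: rowOf σ r' := by
      rw [Fin.val_last, rowOf_cons, ent_self]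
      rfl
    have h2 : ∀ i ∈ ((List.finRange r').map Fin.castSucc).reverse,
        rowOf (Fin.cons (r' : ℕ) σ : Fin (N + 1) → ℕ) (i : ℕ) = false :: rowOf σ (i : ℕ) := by
      intro i hi
      rw [rowOf_cons, ent_of_lt (hmem_lt i hi)]
      rfl
    rw [h1, List.map_congr_left h2, List.flatten_cons,
      show (fun i : Fin (r' + 1) => false :: rowOf σ (i : ℕ))
        = ((false :: ·) ∘ fun i : Fin (r' + 1) => rowOf σ (i : ℕ)) from rfl,
      ← List.map_map]
    rfl
  have hw3 : wList (canonT (r' + 1) (Fin.cons (r' + 1) σ : Fin (N + 1) → ℕ)) = false :: w := by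
    rw [wList_canonT, hrev, List.map_cons]
    have h1 : rowOf (Fin.cons (r' + 1 : ℕ) σ : Fin (N + 1) → ℕ) ((Fin.last r' : Fin (r'+1)) : ℕ)
        = false :: rowOf σ r' := by
      rw [Fin.val_last, rowOf_cons, ent_of_lt (Nat.lt_succ_self r')]
      rfl
    have h2 : ∀ i ∈ ((List.finRange r').map Fin.castSucc).reverse,
        rowOf (Fin.cons (r' + 1 : ℕ) σ : Fin (N + 1) → ℕ) (i : ℕ) = false :: rowOf σ (i : ℕ) := by
      intro i hi
      rw [rowOf_cons, ent_of_lt ((hmem_lt i hi).trans (Nat.lt_succ_self r'))]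
      rfl
    rw [h1, List.map_congr_left h2, List.flatten_cons,
      show (fun i : Fin (r' + 1) => false :: rowOf σ (i : ℕ))
        = ((false :: ·) ∘ fun i : Fin (r' + 1) => rowOf σ (i : ℕ)) from rfl,
      ← List.map_map]
    rfl
  -- counting
  have hrow_ct : ∀ i : ℕ, (rowOf σ i).count true
      = ((List.finRange N).map σ).countP (fun c => decide (c = i)) := by
    intro i
    rw [count_true_rowOf, List.countP_map]
    rfl
  have hv_ct : onesCt v = ((List.finRange N).map σ).countP (fun c => decide (c < r' + 1)) := by
    rw [onesCt, hv, count_true_map, List.countP_map]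
    rfl
  have hvw : onesCt v = onesCt w := by
    rw [hv_ct, onesCt, hw, List.count_append, List.count_flatten, List.map_map]
    have hcc : (List.count true ∘ (false :: ·)) = fun x : List Bool => x.count true := by
      funext x
      simp [Function.comp_def, List.count_cons]
    rw [hcc, hA, hL, List.map_map, sum_map_reverse, List.map_map]
    simp only [Function.comp_def, hrow_ct, Fin.coe_castSucc]
    rw [← Fin.sum_univ_def,
      Fin.sum_univ_eq_sum_range
        (fun k => List.countP (fun c => decide (c = k)) (List.map σ (List.finRange N))) r',
      countP_lt_eq_sum, Finset.sum_range_succ]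
    omega
  have hcard : (Finset.univ.filter (fun i => σ i < r' + 1)).card = onesCt v := by
    rw [card_univ_filter, onesCt, hv, count_true_map]
  rw [hv1, hw1, hv2, hw2, hv3, hw3, hcard]
  exact hp.2.2.2.2.2 v w hvw
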